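/- Let G be a finite simple undirected graph with no isolated vertices, X : V → ℝ a graph signal, and Δx_i := x_i − (1/deg(i)) Σ_{j ∈ N(i)} x_j. Suppose i and j are vertices with Δx_i < 0 < Δx_j, the edge {i,j} belongs to G, x_j < x_i, and both i and j have degree at least 2 in G. Then in G' = G − {i,j}, we have Δ'x_i < 0 and Δ'x_j > 0, where Δ' is computed with the edge set of G'. -/

import Mathlib

open Finset

open scoped Classical in
noncomputable def gdeg {V : Type*} [Fintype V] (G : SimpleGraph V) (i : V) : ℝ :=
  ∑ j, if G.Adj i j then (1:ℝ) else 0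

open scoped Classical in
noncomputable def glap {V : Type*} [Fintype V] (G : SimpleGraph V) (x : V → ℝ) (i : V) : ℝ :=
  x i - (∑ j, if G.Adj i j then x j else 0) / gdeg G i

open scoped Classical

lemma gdeg_eq {V : Type*} [Fintype V] (G : SimpleGraph V) [DecidableRel G.Adj] (i : V) :
    gdeg G i = (G.degree i : ℝ) := by
  rw [gdeg, SimpleGraph.degree, SimpleGraph.neighborFinset_eq_filter, Finset.card_filter]
  push_cast
  exact Finset.sum_congr rfl (fun k _ => by by_cases h : G.Adj i k <;> simp [h])

lemma sum_if_delete {V : Type*} [Fintype V] (G : SimpleGraph V) {i j : V}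
    (hadj : G.Adj i j) (f : V → ℝ) :
    (∑ k, if (G.deleteEdges {s(i, j)}).Adj i k then f k else 0)
      = (∑ k, if G.Adj i k then f k else 0) - f j := by
  have key : ∀ k, (if (G.deleteEdges {s(i, j)}).Adj i k then f k else 0)
      = (if G.Adj i k then f k else 0) - (if k = j then f k else 0) := by
    intro k
    by_cases hk : k = j
    · subst hk
      simp [SimpleGraph.deleteEdges_adj, hadj]
    · have : ¬ s(i, k) = s(i, j) := by
        simp [Sym2.eq_iff, hk, fun h : i = j => hadj.ne h]
      simp [SimpleGraph.deleteEdges_adj, this, hk]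
  rw [Finset.sum_congr rfl (fun k _ => key k), Finset.sum_sub_distrib,
    Finset.sum_ite_eq' Finset.univ j f]
  simp

lemma sum_if_delete' {V : Type*} [Fintype V] (G : SimpleGraph V) {i j : V}
    (hadj : G.Adj i j) (f : V → ℝ) :
    (∑ k, @ite _ ((G.deleteEdges {s(i, j)}).Adj i k) (Classical.propDecidable _) (f k) 0)
      = (∑ k, if G.Adj i k then f k else 0) - f j := by
  convert sum_if_delete G hadj f

theorem stmt2 {V : Type*} [Fintype V] (G : SimpleGraph V) [DecidableRel G.Adj]
    (hiso : ∀ v, ∃ w, G.Adj v w) (x : V → ℝ) (i j : V)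
    (hadj : G.Adj i j)
    (hi : glap G x i < 0) (hj : 0 < glap G x j) (hx : x j < x i)
    (hdi : 2 ≤ G.degree i) (hdj : 2 ≤ G.degree j) :
    glap (G.deleteEdges {s(i, j)}) x i < 0 ∧ 0 < glap (G.deleteEdges {s(i, j)}) x j := by
  have hdi' : (2:ℝ) ≤ gdeg G i := by rw [gdeg_eq]; exact_mod_cast hdi
  have hdj' : (2:ℝ) ≤ gdeg G j := by rw [gdeg_eq]; exact_mod_cast hdj
  have hGdi : gdeg (G.deleteEdges {s(i, j)}) i = gdeg G i - 1 :=
    sum_if_delete' G hadj (fun _ => (1:ℝ))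
  have hGdj : gdeg (G.deleteEdges {s(i, j)}) j = gdeg G j - 1 := by
    have h := sum_if_delete' G hadj.symm (fun _ => (1:ℝ))
    rwa [show s(j, i) = s(i, j) from Sym2.eq_swap] at h
  have hdi0 : (0:ℝ) < gdeg G i := by linarith
  have hdj0 : (0:ℝ) < gdeg G j := by linarith
  simp only [glap] at hi hj
  rw [sub_neg, lt_div_iff₀ hdi0] at hi
  rw [sub_pos, div_lt_iff₀ hdj0] at hj
  constructor
  · rw [glap, sum_if_delete' G hadj x, hGdi, sub_neg,
      lt_div_iff₀ (by linarith : (0:ℝ) < gdeg G i - 1)]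
    nlinarith
  · have hSj := sum_if_delete' G hadj.symm x
    rw [show s(j, i) = s(i, j) from Sym2.eq_swap] at hSj
    rw [glap, hSj, hGdj, sub_pos,
      div_lt_iff₀ (by linarith : (0:ℝ) < gdeg G j - 1)]
    nlinarith
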